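/- Let d : (1, ∞) → ℝ with d(α) ≥ 0 for all α > 1, let b ≥ 0, set p₀ = 2^(−b), and let p₁ ∈ (0, 1] satisfy p₁ ≤ (exp(d(α)) · p₀)^((α−1)/α) for every α > 1. Then log₂ p₁ ≤ −b + L₂(b), where L₂(b) = inf_{α > 1} ( d(α)·(α−1)/(α·log 2) + b/α ) (assume the infimum is over a set bounded below). -/
import Mathlib


/-- If the prior of a `b`-bit secret is `p₀ = 2^(−b)` and the posterior `p₁`
satisfies the upper probability preservation inequality at every order `α > 1`,
then `log₂ p₁ ≤ −b + L₂(b)`. -/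
theorem log_posterior_bound (d : ℝ → ℝ) (hd : ∀ α : ℝ, 1 < α → 0 ≤ d α)
    (b : ℝ) (hb : 0 ≤ b) (p₀ p₁ : ℝ) (hp₀ : p₀ = (2 : ℝ) ^ (-b))
    (hp₁ : p₁ ∈ Set.Ioc (0 : ℝ) 1)
    (hup : ∀ α : ℝ, 1 < α → p₁ ≤ (Real.exp (d α) * p₀) ^ ((α - 1) / α))
    (hbdd : BddBelow (Set.range fun α : {a : ℝ // 1 < a} =>
      d α.1 * (α.1 - 1) / (α.1 * Real.log 2) + b / α.1)) :
    Real.logb 2 p₁ ≤ -b + ⨅ α : {a : ℝ // 1 < a},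
      (d α.1 * (α.1 - 1) / (α.1 * Real.log 2) + b / α.1) := by
  rw [← sub_le_iff_le_add']
  apply le_ciInf (f := fun α : {a : ℝ // 1 < a} =>
      d α.1 * (α.1 - 1) / (α.1 * Real.log 2) + b / α.1)
  rintro ⟨α, hα⟩
  have hα0 : (0:ℝ) < α := lt_trans one_pos hα
  have hl2 : 0 < Real.log 2 := Real.log_pos (by norm_num)
  have hp0pos : 0 < p₀ := by rw [hp₀]; positivity
  have hpos : 0 < Real.exp (d α) * p₀ := by positivity
  have key : Real.log p₁ ≤ ((α - 1) / α) * (d α + (-b) * Real.log 2) := by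
    calc Real.log p₁ ≤ Real.log ((Real.exp (d α) * p₀) ^ ((α - 1) / α)) :=
          Real.log_le_log hp₁.1 (hup α hα)
      _ = ((α - 1) / α) * Real.log (Real.exp (d α) * p₀) := Real.log_rpow hpos _
      _ = ((α - 1) / α) * (d α + (-b) * Real.log 2) := by
          rw [Real.log_mul (Real.exp_ne_zero _) (ne_of_gt hp0pos), Real.log_exp, hp₀,
            Real.log_rpow two_pos]
  simp only [Real.logb, sub_neg_eq_add]
  rw [div_add' _ _ _ (ne_of_gt hl2), div_add_div _ _ (by positivity) (ne_of_gt hα0),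
    div_le_div_iff₀ hl2 (by positivity)]
  have hk : Real.log p₁ * α ≤ (α - 1) * (d α + (-b) * Real.log 2) := by
    have := mul_le_mul_of_nonneg_right key hα0.le
    calc Real.log p₁ * α ≤ ((α - 1) / α) * (d α + (-b) * Real.log 2) * α := this
      _ = (α - 1) * (d α + (-b) * Real.log 2) := by field_simp
  nlinarith [mul_le_mul_of_nonneg_right hk hl2.le, sq_nonneg (Real.log 2)]
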